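/- Let H be a real or complex Banach space, M ≥ 1 and ω ∈ ℝ constants, and S : [0,∞) → B(H) a strongly continuous family of bounded linear operators on H with ‖S(t)‖ ≤ M·e^{ωt} for all t ≥ 0. Let B : H → H be a bounded linear operator, x₀ ∈ H, T > 0, r > 0, and u ∈ L²(0,T) with ‖u‖_{L²(0,T)} ≤ r. If M·‖B‖·√T·r < 1, then the sum of the norms of the Volterra terms of order at least two satisfies Σ_{k=2}^∞ ‖V_k(T;u)‖ ≤ (M³·‖B‖²·T·e^{ωT}·r²·‖x₀‖) / (1 − M·‖B‖·√T·r); in particular the series Σ_{k=2}^∞ V_k(T;u) converges absolutely and its sum F(u) satisfies ‖F(u)‖ ≤ (M³·‖B‖²·T·e^{ωT}·r²·‖x₀‖) / (1 − M·‖B‖·√T·r). -/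

import Mathlib

open MeasureTheory

/-- The pair consisting of `B S(σ_k − σ_{k−1}) B ⋯ B S(σ₁) x₀` together with the last time
`σ_k` (for `k = 0`, the pair `(x₀, 0)`). -/
noncomputable def volterraChain {𝕜 H : Type*} [RCLike 𝕜] [NormedAddCommGroup H]
    [NormedSpace 𝕜 H] (S : ℝ → H →L[𝕜] H) (B : H →L[𝕜] H) (x₀ : H) :
    (k : ℕ) → (Fin k → ℝ) → H × ℝ
  | 0, _ => (x₀, 0)
  | k + 1, σ =>
    let p := volterraChain S B x₀ k (σ ∘ Fin.castSucc)
    (B (S (σ (Fin.last k) - p.2) p.1), σ (Fin.last k))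

/-- The Volterra kernel `w_k(t, σ₁, …, σ_k) = S(t − σ_k) B S(σ_k − σ_{k−1}) B ⋯ B S(σ₁) x₀`. -/
noncomputable def volterraKernel {𝕜 H : Type*} [RCLike 𝕜] [NormedAddCommGroup H]
    [NormedSpace 𝕜 H] (S : ℝ → H →L[𝕜] H) (B : H →L[𝕜] H) (x₀ : H)
    (t : ℝ) (k : ℕ) (σ : Fin k → ℝ) : H :=
  S (t - (volterraChain S B x₀ k σ).2) (volterraChain S B x₀ k σ).1

/-- The ordered simplex `{(σ₁, …, σ_k) : 0 ≤ σ₁ ≤ σ₂ ≤ ⋯ ≤ σ_k ≤ t}`. -/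
def orderedSimplex (k : ℕ) (t : ℝ) : Set (Fin k → ℝ) :=
  {σ | Monotone σ ∧ ∀ i, σ i ∈ Set.Icc (0 : ℝ) t}

/-- The `k`-th Volterra term
`V_k(t;u) = ∫…∫_{0 ≤ σ₁ ≤ ⋯ ≤ σ_k ≤ t} w_k(t,σ₁,…,σ_k) u(σ₁) ⋯ u(σ_k) dσ₁ ⋯ dσ_k`. -/
noncomputable def volterraTerm {𝕜 H : Type*} [RCLike 𝕜] [NormedAddCommGroup H]
    [NormedSpace 𝕜 H] [NormedSpace ℝ H] (S : ℝ → H →L[𝕜] H) (B : H →L[𝕜] H) (x₀ : H)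
    (t : ℝ) (u : ℝ → ℝ) (k : ℕ) : H :=
  ∫ σ in orderedSimplex k t, (∏ i, u (σ i)) • volterraKernel S B x₀ t k σ


/-- Chain norm bound. -/
lemma volterraChain_bound {𝕜 H : Type*} [RCLike 𝕜] [NormedAddCommGroup H]
    [NormedSpace 𝕜 H] (M ω : ℝ) (hM : 1 ≤ M) (S : ℝ → H →L[𝕜] H)
    (hS : ∀ s : ℝ, 0 ≤ s → ‖S s‖ ≤ M * Real.exp (ω * s))
    (B : H →L[𝕜] H) (x₀ : H) :
    ∀ (k : ℕ) (σ : Fin k → ℝ), Monotone σ → (∀ i, 0 ≤ σ i) →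
      0 ≤ (volterraChain S B x₀ k σ).2 ∧
      (∀ t : ℝ, 0 ≤ t → (∀ i, σ i ≤ t) → (volterraChain S B x₀ k σ).2 ≤ t) ∧
      ‖(volterraChain S B x₀ k σ).1‖ ≤
        (M * ‖B‖) ^ k * Real.exp (ω * (volterraChain S B x₀ k σ).2) * ‖x₀‖ := by
  intro k
  induction k with
  | zero =>
    intro σ _ _
    simp [volterraChain]
  | succ k ih =>
    intro σ hmono hpos
    have hmono' : Monotone (σ ∘ Fin.castSucc) :=
      hmono.comp (Fin.strictMono_castSucc).monotone
    have hpos' : ∀ i, 0 ≤ (σ ∘ Fin.castSucc) i := fun i => hpos _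
    obtain ⟨h0, hle, hnorm⟩ := ih (σ ∘ Fin.castSucc) hmono' hpos'
    set p := volterraChain S B x₀ k (σ ∘ Fin.castSucc) with hp
    have hchain : volterraChain S B x₀ (k + 1) σ =
        (B (S (σ (Fin.last k) - p.2) p.1), σ (Fin.last k)) := rfl
    have hplast : p.2 ≤ σ (Fin.last k) :=
      hle (σ (Fin.last k)) (hpos _) (fun i => hmono (Fin.le_last _))
    have hd : 0 ≤ σ (Fin.last k) - p.2 := by linarith
    have hM0 : (0:ℝ) ≤ M := le_trans zero_le_one hM
    refine ⟨?_, ?_, ?_⟩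
    · rw [hchain]; exact hpos _
    · intro t _ ht; rw [hchain]; exact ht _
    · rw [hchain]
      have h1 : ‖B (S (σ (Fin.last k) - p.2) p.1)‖ ≤
          ‖B‖ * ((M * Real.exp (ω * (σ (Fin.last k) - p.2))) *
            ((M * ‖B‖) ^ k * Real.exp (ω * p.2) * ‖x₀‖)) := by
        calc ‖B (S (σ (Fin.last k) - p.2) p.1)‖
            ≤ ‖B‖ * ‖S (σ (Fin.last k) - p.2) p.1‖ := B.le_opNorm _
          _ ≤ ‖B‖ * (‖S (σ (Fin.last k) - p.2)‖ * ‖p.1‖) := by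
              gcongr; exact (S _).le_opNorm _
          _ ≤ ‖B‖ * ((M * Real.exp (ω * (σ (Fin.last k) - p.2))) *
              ((M * ‖B‖) ^ k * Real.exp (ω * p.2) * ‖x₀‖)) :=
              mul_le_mul_of_nonneg_left
                (mul_le_mul (hS _ hd) hnorm (norm_nonneg _)
                  (mul_nonneg hM0 (Real.exp_pos _).le)) (norm_nonneg _)
      refine h1.trans (le_of_eq ?_)
      rw [show ω * σ (Fin.last k) = ω * (σ (Fin.last k) - p.2) + ω * p.2 by ring,
        Real.exp_add]
      ring

/-- Kernel norm bound on the ordered simplex. -/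
lemma volterraKernel_bound {𝕜 H : Type*} [RCLike 𝕜] [NormedAddCommGroup H]
    [NormedSpace 𝕜 H] (M ω : ℝ) (hM : 1 ≤ M) (S : ℝ → H →L[𝕜] H)
    (hS : ∀ s : ℝ, 0 ≤ s → ‖S s‖ ≤ M * Real.exp (ω * s))
    (B : H →L[𝕜] H) (x₀ : H) (T : ℝ) (hT : 0 ≤ T) (k : ℕ) (σ : Fin k → ℝ)
    (hσ : σ ∈ orderedSimplex k T) :
    ‖volterraKernel S B x₀ T k σ‖ ≤ M * (M * ‖B‖) ^ k * Real.exp (ω * T) * ‖x₀‖ := by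
  obtain ⟨hmono, hmem⟩ := hσ
  obtain ⟨h0, hle, hnorm⟩ := volterraChain_bound M ω hM S hS B x₀ k σ hmono
    (fun i => (hmem i).1)
  have hT2 : (volterraChain S B x₀ k σ).2 ≤ T := hle T hT (fun i => (hmem i).2)
  have hM0 : (0:ℝ) ≤ M := le_trans zero_le_one hM
  calc ‖volterraKernel S B x₀ T k σ‖
      ≤ ‖S (T - (volterraChain S B x₀ k σ).2)‖ * ‖(volterraChain S B x₀ k σ).1‖ :=
        (S _).le_opNorm _
    _ ≤ (M * Real.exp (ω * (T - (volterraChain S B x₀ k σ).2))) *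
        ((M * ‖B‖) ^ k * Real.exp (ω * (volterraChain S B x₀ k σ).2) * ‖x₀‖) :=
        mul_le_mul (hS _ (by linarith)) hnorm (norm_nonneg _)
          (mul_nonneg hM0 (Real.exp_pos _).le)
    _ = M * (M * ‖B‖) ^ k * Real.exp (ω * T) * ‖x₀‖ := by
        rw [show ω * T = ω * (T - (volterraChain S B x₀ k σ).2) +
          ω * (volterraChain S B x₀ k σ).2 by ring, Real.exp_add]
        ring

lemma measurableSet_orderedSimplex (k : ℕ) (t : ℝ) :
    MeasurableSet (orderedSimplex k t) := by
  have : orderedSimplex k t =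
      (⋂ (i : Fin k) (j : Fin k) (_ : i ≤ j), {σ : Fin k → ℝ | σ i ≤ σ j}) ∩
      (⋂ i : Fin k, {σ : Fin k → ℝ | σ i ∈ Set.Icc (0:ℝ) t}) := by
    ext σ
    simp only [orderedSimplex, Set.mem_setOf_eq, Set.mem_inter_iff, Set.mem_iInter]
    constructor
    · rintro ⟨h1, h2⟩; exact ⟨fun i j hij => h1 hij, h2⟩
    · rintro ⟨h1, h2⟩; exact ⟨fun i j hij => h1 i j hij, h2⟩
  rw [this]
  refine MeasurableSet.inter ?_ ?_
  · refine MeasurableSet.iInter fun i => MeasurableSet.iInter fun j =>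
      MeasurableSet.iInter fun _ => ?_
    exact measurableSet_le (measurable_pi_apply i) (measurable_pi_apply j)
  · exact MeasurableSet.iInter fun i =>
      (measurable_pi_apply i) measurableSet_Icc
/-- If `M ‖B‖ √T r < 1` and `‖u‖_{L²(0,T)} ≤ r`, then the series of Volterra terms of order
at least two converges absolutely, `Σ_{k=2}^∞ ‖V_k(T;u)‖` is bounded by
`M³ ‖B‖² T e^{ωT} r² ‖x₀‖ / (1 − M ‖B‖ √T r)`, and the norm of the sum
`F(u) = Σ_{k=2}^∞ V_k(T;u)` obeys the same bound. -/
theorem stmt_16 {𝕜 H : Type*} [RCLike 𝕜] [NormedAddCommGroup H] [NormedSpace 𝕜 H]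
    [NormedSpace ℝ H] [IsScalarTower ℝ 𝕜 H] [CompleteSpace H]
    (M ω : ℝ) (hM : 1 ≤ M) (S : ℝ → H →L[𝕜] H)
    (hScont : ∀ x : H, ContinuousOn (fun s => S s x) (Set.Ici (0 : ℝ)))
    (hS : ∀ s : ℝ, 0 ≤ s → ‖S s‖ ≤ M * Real.exp (ω * s))
    (B : H →L[𝕜] H) (x₀ : H) (T : ℝ) (hT : 0 < T) (r : ℝ) (hr : 0 < r) (u : ℝ → ℝ)
    (hu : MemLp u 2 (volume.restrict (Set.Ioc (0 : ℝ) T)))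
    (hur : ((∫ σ in Set.Ioc (0 : ℝ) T, (u σ) ^ 2) ^ (1 / 2 : ℝ)) ≤ r)
    (hsmall : M * ‖B‖ * Real.sqrt T * r < 1) :
    Summable (fun k : ℕ => ‖volterraTerm S B x₀ T u (k + 2)‖) ∧
    (∑' k : ℕ, ‖volterraTerm S B x₀ T u (k + 2)‖) ≤
      M ^ 3 * ‖B‖ ^ 2 * T * Real.exp (ω * T) * r ^ 2 * ‖x₀‖ /
        (1 - M * ‖B‖ * Real.sqrt T * r) ∧
    ‖∑' k : ℕ, volterraTerm S B x₀ T u (k + 2)‖ ≤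
      M ^ 3 * ‖B‖ ^ 2 * T * Real.exp (ω * T) * r ^ 2 * ‖x₀‖ /
        (1 - M * ‖B‖ * Real.sqrt T * r) := by
  have hM0 : (0:ℝ) ≤ M := le_trans zero_le_one hM
  set μ0 := volume.restrict (Set.Ioc (0 : ℝ) T) with hμ0
  haveI hfin : IsFiniteMeasure μ0 := by
    constructor
    rw [hμ0, Measure.restrict_apply_univ, Real.volume_Ioc]
    exact ENNReal.ofReal_lt_top
  -- Cauchy-Schwarz : ∫ |u| over (0,T] ≤ r * √T
  have hCS : (∫ t in Set.Ioc (0:ℝ) T, |u t|) ≤ Real.sqrt T * r := by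
    have hpq : Real.HolderConjugate 2 2 := Real.HolderConjugate.two_two
    have h2 : ENNReal.ofReal (2:ℝ) = 2 := by norm_num
    have habs : MemLp (fun t => |u t|) (ENNReal.ofReal (2:ℝ)) μ0 := by
      rw [h2]
      simpa [Real.norm_eq_abs] using hu.norm
    have hone : MemLp (fun _ : ℝ => (1:ℝ)) (ENNReal.ofReal (2:ℝ)) μ0 := by
      rw [h2]; exact memLp_const 1
    have key := integral_mul_le_Lp_mul_Lq_of_nonneg hpq
      (Filter.Eventually.of_forall fun t => abs_nonneg (u t))
      (Filter.Eventually.of_forall fun _ => zero_le_one) habs hone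
    simp only [mul_one, Real.one_rpow] at key
    have hsq : (fun t => |u t| ^ (2:ℝ)) = fun t => u t ^ 2 := by
      funext t
      rw [show (2:ℝ) = ((2:ℕ):ℝ) by norm_num, Real.rpow_natCast, sq_abs]
    rw [hsq] at key
    have hvol : (∫ _ : ℝ, (1:ℝ) ∂μ0) = T := by
      rw [integral_const, smul_eq_mul, mul_one, Measure.real, Measure.restrict_apply_univ,
        Real.volume_Ioc, sub_zero, ENNReal.toReal_ofReal hT.le]
    rw [hvol] at key
    have hTr : (T:ℝ) ^ (1/2:ℝ) = Real.sqrt T := (Real.sqrt_eq_rpow T).symm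
    rw [hTr] at key
    refine key.trans ?_
    have h1 : (∫ t, u t ^ 2 ∂μ0) ^ (1/2:ℝ) ≤ r := hur
    have h2' : (0:ℝ) ≤ (∫ t, u t ^ 2 ∂μ0) ^ (1/2:ℝ) :=
      Real.rpow_nonneg (integral_nonneg fun t => sq_nonneg _) _
    calc (∫ t, u t ^ 2 ∂μ0) ^ (1/2:ℝ) * Real.sqrt T
        ≤ r * Real.sqrt T := by
          exact mul_le_mul_of_nonneg_right h1 (Real.sqrt_nonneg T)
      _ = Real.sqrt T * r := mul_comm _ _
  -- integrability of |u| on [0,T]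
  have huint : Integrable u μ0 := hu.integrable one_le_two
  have huabs : IntegrableOn (fun t => |u t|) (Set.Ioc (0:ℝ) T) volume := by
    exact (by simpa [Real.norm_eq_abs] using huint.norm : Integrable (fun t => |u t|) μ0)
  have huIcc : IntegrableOn (fun t => |u t|) (Set.Icc (0:ℝ) T) volume :=
    huabs.congr_set_ae Ioc_ae_eq_Icc.symm
  set J := ∫ t in Set.Icc (0:ℝ) T, |u t| with hJ
  have hJIoc : J = ∫ t in Set.Ioc (0:ℝ) T, |u t| :=
    (setIntegral_congr_set Ioc_ae_eq_Icc).symm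
  have hJ0 : 0 ≤ J := integral_nonneg fun t => abs_nonneg _
  have hJle : J ≤ Real.sqrt T * r := by rw [hJIoc]; exact hCS
  set q := M * ‖B‖ * Real.sqrt T * r with hqdef
  have hq0 : 0 ≤ q :=
    mul_nonneg (mul_nonneg (mul_nonneg hM0 (norm_nonneg B)) (Real.sqrt_nonneg T)) hr.le
  set a := M * Real.exp (ω * T) * ‖x₀‖ with hadef
  have ha0 : 0 ≤ a :=
    mul_nonneg (mul_nonneg hM0 (Real.exp_pos _).le) (norm_nonneg _)
  -- Main per-term bound
  have hVbound : ∀ k : ℕ, ‖volterraTerm S B x₀ T u k‖ ≤ a * q ^ k := by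
    intro k
    set C := M * (M * ‖B‖) ^ k * Real.exp (ω * T) * ‖x₀‖ with hC
    have hC0 : 0 ≤ C :=
      mul_nonneg (mul_nonneg (mul_nonneg hM0 (pow_nonneg
        (mul_nonneg hM0 (norm_nonneg B)) k)) (Real.exp_pos _).le) (norm_nonneg _)
    set cube := Set.pi Set.univ fun _ : Fin k => Set.Icc (0:ℝ) T with hcube
    have hcube_meas : MeasurableSet cube :=
      MeasurableSet.univ_pi fun _ => measurableSet_Icc
    set f := (Set.Icc (0:ℝ) T).indicator (fun t => |u t|) with hf
    have hf_int : Integrable f volume := huIcc.integrable_indicator measurableSet_Icc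
    have hfi_cube : Integrable (fun σ : Fin k → ℝ => ∏ i, f (σ i)) volume :=
      Integrable.fintype_prod fun _ => hf_int
    have hind : cube.indicator (fun σ : Fin k → ℝ => ∏ i, |u (σ i)|) =
        fun σ => ∏ i, f (σ i) := by
      funext σ
      by_cases h : σ ∈ cube
      · rw [Set.indicator_of_mem h]
        exact Finset.prod_congr rfl fun i _ =>
          (Set.indicator_of_mem (h i (Set.mem_univ i)) (fun t => |u t|)).symm
      · rw [Set.indicator_of_notMem h]
        obtain ⟨i, hi⟩ : ∃ i, σ i ∉ Set.Icc (0:ℝ) T := by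
          by_contra hc
          push_neg at hc
          exact h fun i _ => hc i
        exact (Finset.prod_eq_zero (Finset.mem_univ i)
          (Set.indicator_of_notMem hi _)).symm
    have hg_cube_int : IntegrableOn (fun σ : Fin k → ℝ => ∏ i, |u (σ i)|) cube volume :=
      (integrable_indicator_iff hcube_meas).mp (hind ▸ hfi_cube)
    have hcube_val : (∫ σ in cube, ∏ i, |u (σ i)|) = J ^ k := by
      rw [← integral_indicator hcube_meas, hind,
        MeasureTheory.volume_pi, MeasureTheory.integral_fintype_prod_eq_pow (ι := Fin k) f,
        integral_indicator measurableSet_Icc, Fintype.card_fin]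
    have hsub : orderedSimplex k T ⊆ cube := fun σ hσ i _ => hσ.2 i
    have hsimp_le : (∫ σ in orderedSimplex k T, ∏ i, |u (σ i)|) ≤ J ^ k := by
      rw [← hcube_val]
      exact setIntegral_mono_set hg_cube_int
        (Filter.Eventually.of_forall fun σ => Finset.prod_nonneg fun i _ => abs_nonneg _)
        (HasSubset.Subset.eventuallyLE hsub)
    have hsimp0 : 0 ≤ ∫ σ in orderedSimplex k T, ∏ i, |u (σ i)| :=
      integral_nonneg fun σ => Finset.prod_nonneg fun i _ => abs_nonneg _
    have step1 : ‖volterraTerm S B x₀ T u k‖ ≤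
        ∫ σ in orderedSimplex k T,
          ‖(∏ i, u (σ i)) • volterraKernel S B x₀ T k σ‖ :=
      norm_integral_le_integral_norm _
    have step2 : (∫ σ in orderedSimplex k T,
          ‖(∏ i, u (σ i)) • volterraKernel S B x₀ T k σ‖) ≤
        ∫ σ in orderedSimplex k T, (∏ i, |u (σ i)|) * C := by
      refine integral_mono_of_nonneg
        (Filter.Eventually.of_forall fun σ => norm_nonneg _)
        (((hg_cube_int.mono_set hsub)).mul_const C) ?_
      filter_upwards [ae_restrict_mem (measurableSet_orderedSimplex k T)] with σ hσ
      rw [norm_smul, Real.norm_eq_abs, Finset.abs_prod]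
      exact mul_le_mul_of_nonneg_left
        (volterraKernel_bound M ω hM S hS B x₀ T hT.le k σ hσ)
        (Finset.prod_nonneg fun i _ => abs_nonneg _)
    have step3 : (∫ σ in orderedSimplex k T, (∏ i, |u (σ i)|) * C) ≤ J ^ k * C := by
      rw [integral_mul_const]
      exact mul_le_mul_of_nonneg_right hsimp_le hC0
    have step4 : J ^ k * C ≤ (Real.sqrt T * r) ^ k * C :=
      mul_le_mul_of_nonneg_right (pow_le_pow_left₀ hJ0 hJle k) hC0
    have heq : (Real.sqrt T * r) ^ k * C = a * q ^ k := by
      rw [hC, hadef, hqdef,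
        show M * ‖B‖ * Real.sqrt T * r = (M * ‖B‖) * (Real.sqrt T * r) by ring,
        mul_pow]
      ring
    calc ‖volterraTerm S B x₀ T u k‖ ≤ _ := step1
      _ ≤ _ := step2
      _ ≤ J ^ k * C := step3
      _ ≤ (Real.sqrt T * r) ^ k * C := step4
      _ = a * q ^ k := heq
  have hV' : ∀ k : ℕ, ‖volterraTerm S B x₀ T u (k + 2)‖ ≤ a * q ^ 2 * q ^ k := by
    intro k
    have := hVbound (k + 2)
    calc ‖volterraTerm S B x₀ T u (k + 2)‖ ≤ a * q ^ (k + 2) := this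
      _ = a * q ^ 2 * q ^ k := by rw [pow_add]; ring
  have hgeo : Summable (fun k : ℕ => a * q ^ 2 * q ^ k) :=
    (summable_geometric_of_lt_one hq0 hsmall).mul_left _
  have hsum : Summable (fun k : ℕ => ‖volterraTerm S B x₀ T u (k + 2)‖) :=
    Summable.of_nonneg_of_le (fun k => norm_nonneg _) hV' hgeo
  have hnum : a * q ^ 2 = M ^ 3 * ‖B‖ ^ 2 * T * Real.exp (ω * T) * r ^ 2 * ‖x₀‖ := by
    rw [hadef, hqdef,
      show (M * ‖B‖ * Real.sqrt T * r) ^ 2 =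
        M ^ 2 * ‖B‖ ^ 2 * Real.sqrt T ^ 2 * r ^ 2 by ring,
      Real.sq_sqrt hT.le]
    ring
  have htsum : (∑' k : ℕ, ‖volterraTerm S B x₀ T u (k + 2)‖) ≤
      M ^ 3 * ‖B‖ ^ 2 * T * Real.exp (ω * T) * r ^ 2 * ‖x₀‖ /
        (1 - M * ‖B‖ * Real.sqrt T * r) := by
    calc (∑' k : ℕ, ‖volterraTerm S B x₀ T u (k + 2)‖)
        ≤ ∑' k : ℕ, a * q ^ 2 * q ^ k := Summable.tsum_le_tsum hV' hsum hgeo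
      _ = a * q ^ 2 * (1 - q)⁻¹ := by
          rw [tsum_mul_left, tsum_geometric_of_lt_one hq0 hsmall]
      _ = M ^ 3 * ‖B‖ ^ 2 * T * Real.exp (ω * T) * r ^ 2 * ‖x₀‖ /
          (1 - M * ‖B‖ * Real.sqrt T * r) := by
          rw [hnum, div_eq_mul_inv]
  exact ⟨hsum, htsum,
    le_trans (norm_tsum_le_tsum_norm hsum) htsum⟩
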